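/- With indices i1 ∈ I1, j2, k2 ∈ I2, j3, k3, ℓ3 ∈ I3, ℓ4, k4 ∈ I4: (a) e_{i1 j2} ∧ e_{k2 ℓ4} ∈ Im(d3) whenever j2 ≠ k2; (b) e_{i1 j3} ∧ e_{k3 ℓ4} ∈ Im(d3) whenever j3 ≠ k3; and (c) every element of the form Σ_{j2 ∈ I2} α_{j2} (e_{i1 j2} ∧ e_{j2 k4}) + Σ_{j3 ∈ I3} β_{j3} (e_{i1 j3} ∧ e_{j3 k4}) with Σ_{j2} α_{j2} + Σ_{j3} β_{j3} = 0 lies in Im(d3). -/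

import Mathlib

set_option maxHeartbeats 1000000
set_option synthInstance.maxHeartbeats 400000


attribute [local instance 100] LieRing.ofAssociativeRing

/-- Index type with four consecutive blocks of sizes `n 0, n 1, n 2, n 3`
(corresponding to the partition `I1 ⊔ I2 ⊔ I3 ⊔ I4` of `{1, …, N}`). -/
abbrev BIdx (n : Fin 4 → ℕ) := Σ a : Fin 4, Fin (n a)

/-- The Lie algebra `𝔲` of strictly block upper triangular matrices. -/
def uLie (n : Fin 4 → ℕ) (K : Type*) [Field K] :
    LieSubalgebra K (Matrix (BIdx n) (BIdx n) K) where
  carrier := {M | ∀ (a b : Fin 4) (i : Fin (n a)) (j : Fin (n b)), b ≤ a → M ⟨a, i⟩ ⟨b, j⟩ = 0}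
  add_mem' := by
    intro x y hx hy a b i j h
    simp [Matrix.add_apply, hx a b i j h, hy a b i j h]
  zero_mem' := by intro a b i j h; simp
  smul_mem' := by
    intro c x hx a b i j h
    simp [Matrix.smul_apply, hx a b i j h]
  lie_mem' := by
    intro x y hx hy a b i j h
    have key : ∀ u v : Matrix (BIdx n) (BIdx n) K,
        (∀ (a b : Fin 4) (i : Fin (n a)) (j : Fin (n b)), b ≤ a → u ⟨a, i⟩ ⟨b, j⟩ = 0) →
        (∀ (a b : Fin 4) (i : Fin (n a)) (j : Fin (n b)), b ≤ a → v ⟨a, i⟩ ⟨b, j⟩ = 0) →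
        (u * v) ⟨a, i⟩ ⟨b, j⟩ = 0 := by
      intro u v hu hv
      rw [Matrix.mul_apply]
      apply Finset.sum_eq_zero
      rintro ⟨c, kk⟩ -
      by_cases hc : c ≤ a
      · rw [hu a c i kk hc, zero_mul]
      · rw [hv c b kk j (h.trans (le_of_not_ge hc)), mul_zero]
    rw [Ring.lie_def, Matrix.sub_apply, key x y hx hy, key y x hy hx, sub_zero]

/-- The type of elements of `𝔲`. -/
abbrev UU (n : Fin 4 → ℕ) (K : Type*) [Field K] := ↥(uLie n K)

/-- `x ∧ y`, as an element of the second exterior power `⋀[K]^2 𝔲`. -/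
noncomputable def wedge {n : Fin 4 → ℕ} {K : Type*} [Field K] (x y : UU n K) :
    ↥(⋀[K]^2 (UU n K)) :=
  ⟨ExteriorAlgebra.ιMulti K 2 ![x, y], ExteriorAlgebra.ιMulti_range K 2 ⟨![x, y], rfl⟩⟩

/-- `x` is supported on the `(a, b)` block. -/
def inBlock {n : Fin 4 → ℕ} {K : Type*} [Field K] (a b : Fin 4) (x : UU n K) : Prop :=
  ∀ (c d : Fin 4) (i : Fin (n c)) (j : Fin (n d)), ¬(c = a ∧ d = b) →
    (x : Matrix (BIdx n) (BIdx n) K) ⟨c, i⟩ ⟨d, j⟩ = 0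

/-- The image of the Chevalley–Eilenberg differential `d3 : Λ³𝔲 → Λ²𝔲`: the span of all
`z ∧ [x,y] + y ∧ [z,x] + x ∧ [y,z]`. -/
noncomputable def Imd3 (n : Fin 4 → ℕ) (K : Type*) [Field K] :
    Submodule K ↥(⋀[K]^2 (UU n K)) :=
  Submodule.span K
    {w | ∃ x y z : UU n K, w = wedge z ⁅x, y⁆ + wedge y ⁅z, x⁆ + wedge x ⁅y, z⁆}

/-- The matrix unit `e_{x y}` for `x` in block `a`, `y` in block `b`, `a < b`, as an
element of `𝔲`. -/
def eU {n : Fin 4 → ℕ} {K : Type*} [Field K] (a b : Fin 4) (h : a < b)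
    (i : Fin (n a)) (j : Fin (n b)) : UU n K :=
  ⟨Matrix.single ⟨a, i⟩ ⟨b, j⟩ 1, by
    intro c d k l hdc
    rw [Matrix.single, Matrix.of_apply, if_neg]
    rintro ⟨h1, h2⟩
    have hac : a = c := congrArg Sigma.fst h1
    have hbd : b = d := congrArg Sigma.fst h2
    rw [← hac, ← hbd] at hdc
    exact absurd hdc (not_le.mpr h)⟩

variable {n : Fin 4 → ℕ} {K : Type*} [Field K]

/-- The matrix unit `e_{i1 j2}` (blocks `I1 → I2`, i.e. `(0,1)`). -/
def e01 (i : Fin (n 0)) (j : Fin (n 1)) : UU n K := eU 0 1 (by decide) i j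

/-- The matrix unit `e_{i1 j3}` (blocks `I1 → I3`, i.e. `(0,2)`). -/
def e02 (i : Fin (n 0)) (j : Fin (n 2)) : UU n K := eU 0 2 (by decide) i j

/-- The matrix unit `e_{i1 j4}` (blocks `I1 → I4`, i.e. `(0,3)`). -/
def e03 (i : Fin (n 0)) (j : Fin (n 3)) : UU n K := eU 0 3 (by decide) i j

/-- The matrix unit `e_{i2 j3}` (blocks `I2 → I3`, i.e. `(1,2)`). -/
def e12 (i : Fin (n 1)) (j : Fin (n 2)) : UU n K := eU 1 2 (by decide) i j

/-- The matrix unit `e_{i2 j4}` (blocks `I2 → I4`, i.e. `(1,3)`). -/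
def e13 (i : Fin (n 1)) (j : Fin (n 3)) : UU n K := eU 1 3 (by decide) i j

/-- The matrix unit `e_{i3 j4}` (blocks `I3 → I4`, i.e. `(2,3)`). -/
def e23 (i : Fin (n 2)) (j : Fin (n 3)) : UU n K := eU 2 3 (by decide) i j

lemma lie_val (x y : UU n K) : (⁅x, y⁆ : UU n K).val = x.val * y.val - y.val * x.val := by
  rfl

lemma lie_eU_same {a b c : Fin 4} (hab : a < b) (hbc : b < c) (i : Fin (n a)) (j : Fin (n b))
    (k : Fin (n c)) :
    (⁅(eU a b hab i j : UU n K), (eU b c hbc j k : UU n K)⁆) = eU a c (hab.trans hbc) i k := by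
  apply Subtype.ext
  rw [lie_val]
  show Matrix.single _ _ 1 * Matrix.single _ _ 1 -
      Matrix.single _ _ 1 * Matrix.single _ _ 1 = Matrix.single _ _ 1
  rw [Matrix.single_mul_single_same, Matrix.single_mul_single_of_ne, one_mul, sub_zero]
  intro h
  exact absurd (congrArg Sigma.fst h) (ne_of_gt (hab.trans hbc))

lemma lie_eU_zero {a b c d : Fin 4} (hab : a < b) (hcd : c < d) (i : Fin (n a)) (j : Fin (n b))
    (k : Fin (n c)) (l : Fin (n d)) (hz1 : (⟨b, j⟩ : BIdx n) ≠ ⟨c, k⟩)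
    (hz2 : (⟨d, l⟩ : BIdx n) ≠ ⟨a, i⟩) :
    (⁅(eU a b hab i j : UU n K), (eU c d hcd k l : UU n K)⁆) = 0 := by
  apply Subtype.ext
  rw [lie_val]
  show Matrix.single _ _ 1 * Matrix.single _ _ 1 -
      Matrix.single _ _ 1 * Matrix.single _ _ 1 = 0
  rw [Matrix.single_mul_single_of_ne (h := hz1), Matrix.single_mul_single_of_ne (h := hz2), sub_zero]

lemma wedge_zero_right (x : UU n K) : wedge x (0 : UU n K) = 0 := by
  apply Subtype.ext
  show ExteriorAlgebra.ιMulti K 2 ![x, 0] = 0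
  exact (ExteriorAlgebra.ιMulti K 2).map_coord_zero 1 rfl

lemma wedge_anticomm (x y : UU n K) : wedge x y = - wedge y x := by
  apply Subtype.ext
  show ExteriorAlgebra.ιMulti K 2 ![x, y] = -ExteriorAlgebra.ιMulti K 2 ![y, x]
  have : ![x, y] = ![y, x] ∘ Equiv.swap (0 : Fin 2) 1 := by
    funext i
    fin_cases i <;> simp
  rw [this]
  exact (ExteriorAlgebra.ιMulti K 2).map_swap (v := ![y, x]) (by decide : (0 : Fin 2) ≠ 1)

lemma gen_mem (x y z : UU n K) :
    wedge z ⁅x, y⁆ + wedge y ⁅z, x⁆ + wedge x ⁅y, z⁆ ∈ Imd3 n K :=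
  Submodule.subset_span ⟨x, y, z, rfl⟩

lemma sigma_ne_fst {a b : Fin 4} (h : a ≠ b) {i : Fin (n a)} {j : Fin (n b)} :
    (⟨a, i⟩ : BIdx n) ≠ ⟨b, j⟩ := fun hh => h (congrArg Sigma.fst hh)

lemma sigma_ne_snd {a : Fin 4} {i j : Fin (n a)} (h : i ≠ j) :
    (⟨a, i⟩ : BIdx n) ≠ ⟨a, j⟩ := by
  intro hh
  apply h
  simpa using hh

/-- (a) `e_{i1 j2} ∧ e_{k2 ℓ4} ∈ Im(d3)` whenever `j2 ≠ k2`; (b) `e_{i1 j3} ∧ e_{k3 ℓ4}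
∈ Im(d3)` whenever `j3 ≠ k3`; (c) every `Σ_{j2} α_{j2} (e_{i1 j2} ∧ e_{j2 k4}) +
Σ_{j3} β_{j3} (e_{i1 j3} ∧ e_{j3 k4})` with `Σ α + Σ β = 0` lies in `Im(d3)`. -/
theorem stmt_16 (n : Fin 4 → ℕ) (h0 : 1 ≤ n 0) (h1 : 3 ≤ n 1) (h2 : 3 ≤ n 2)
    (h3 : 1 ≤ n 3) (K : Type*) [Field K] :
    (∀ (i : Fin (n 0)) (j k : Fin (n 1)) (l : Fin (n 3)), j ≠ k →
      wedge (e01 (K := K) i j) (e13 k l) ∈ Imd3 n K) ∧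
    (∀ (i : Fin (n 0)) (j k : Fin (n 2)) (l : Fin (n 3)), j ≠ k →
      wedge (e02 (K := K) i j) (e23 k l) ∈ Imd3 n K) ∧
    (∀ (i : Fin (n 0)) (kk : Fin (n 3)) (α : Fin (n 1) → K) (β : Fin (n 2) → K),
      (∑ j, α j) + (∑ j, β j) = 0 →
      ((∑ j, α j • wedge (e01 (K := K) i j) (e13 j kk)) +
        ∑ j, β j • wedge (e02 (K := K) i j) (e23 j kk)) ∈ Imd3 n K) := by
  refine ⟨?_, ?_, ?_⟩
  · -- (a)
    intro i j k l hjk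
    have m : Fin (n 2) := ⟨0, by omega⟩
    have hxy : (⁅(e12 (K := K) k m : UU n K), (e23 m l : UU n K)⁆) = e13 k l :=
      lie_eU_same (by decide) (by decide) k m l
    have hzx : (⁅(e01 (K := K) i j : UU n K), (e12 k m : UU n K)⁆) = 0 :=
      lie_eU_zero (by decide) (by decide) i j k m (sigma_ne_snd hjk) (sigma_ne_fst (by decide))
    have hyz : (⁅(e23 (K := K) m l : UU n K), (e01 i j : UU n K)⁆) = 0 :=
      lie_eU_zero (by decide) (by decide) m l i j (sigma_ne_fst (by decide))
        (sigma_ne_fst (by decide))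
    have hg := gen_mem (e12 (K := K) k m) (e23 m l) (e01 i j)
    rwa [hxy, hzx, hyz, wedge_zero_right, wedge_zero_right, add_zero, add_zero] at hg
  · -- (b)
    intro i j k l hjk
    have m : Fin (n 1) := ⟨0, by omega⟩
    have hxy : (⁅(e01 (K := K) i m : UU n K), (e12 m j : UU n K)⁆) = e02 i j :=
      lie_eU_same (by decide) (by decide) i m j
    have hzx : (⁅(e23 (K := K) k l : UU n K), (e01 i m : UU n K)⁆) = 0 :=
      lie_eU_zero (by decide) (by decide) k l i m (sigma_ne_fst (by decide))
        (sigma_ne_fst (by decide))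
    have hyz : (⁅(e12 (K := K) m j : UU n K), (e23 k l : UU n K)⁆) = 0 :=
      lie_eU_zero (by decide) (by decide) m j k l (sigma_ne_snd hjk) (sigma_ne_fst (by decide))
    have hg := gen_mem (e01 (K := K) i m) (e12 m j) (e23 k l)
    rw [hxy, hzx, hyz, wedge_zero_right, wedge_zero_right, add_zero, add_zero] at hg
    rw [wedge_anticomm]
    exact neg_mem hg
  · -- (c)
    intro i kk α β hsum
    have m0 : Fin (n 2) := ⟨0, by omega⟩
    have j0 : Fin (n 1) := ⟨0, by omega⟩
    have hD : ∀ (j : Fin (n 1)) (m : Fin (n 2)),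
        wedge (e01 (K := K) i j) (e13 j kk) - wedge (e02 i m) (e23 m kk) ∈ Imd3 n K := by
      intro j m
      have hxy : (⁅(e01 (K := K) i j : UU n K), (e12 j m : UU n K)⁆) = e02 i m :=
        lie_eU_same (by decide) (by decide) i j m
      have hzx : (⁅(e23 (K := K) m kk : UU n K), (e01 i j : UU n K)⁆) = 0 :=
        lie_eU_zero (by decide) (by decide) m kk i j (sigma_ne_fst (by decide))
          (sigma_ne_fst (by decide))
      have hyz : (⁅(e12 (K := K) j m : UU n K), (e23 m kk : UU n K)⁆) = e13 j kk :=
        lie_eU_same (by decide) (by decide) j m kk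
      have hg := gen_mem (e01 (K := K) i j) (e12 j m) (e23 m kk)
      rw [hxy, hzx, hyz, wedge_zero_right, add_zero,
        wedge_anticomm (e23 m kk) (e02 i m)] at hg
      rwa [sub_eq_neg_add]
    have hB : ∀ m : Fin (n 2),
        wedge (e02 (K := K) i m) (e23 m kk) - wedge (e02 i m0) (e23 m0 kk) ∈ Imd3 n K := by
      intro m
      have h3 := sub_mem (hD j0 m0) (hD j0 m)
      have heq : (wedge (e01 (K := K) i j0) (e13 j0 kk) - wedge (e02 i m0) (e23 m0 kk)) -
          (wedge (e01 (K := K) i j0) (e13 j0 kk) - wedge (e02 i m) (e23 m kk)) =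
          wedge (e02 (K := K) i m) (e23 m kk) - wedge (e02 i m0) (e23 m0 kk) := by abel
      rwa [heq] at h3
    have key : ((∑ j, α j • wedge (e01 (K := K) i j) (e13 j kk)) +
          ∑ j, β j • wedge (e02 (K := K) i j) (e23 j kk))
        = (∑ j, α j • (wedge (e01 (K := K) i j) (e13 j kk) - wedge (e02 i m0) (e23 m0 kk))) +
          ((∑ j, β j • (wedge (e02 (K := K) i j) (e23 j kk) - wedge (e02 i m0) (e23 m0 kk))) +
            ((∑ j, α j) + ∑ j, β j) • wedge (e02 (K := K) i m0) (e23 m0 kk)) := by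
      rw [add_smul, Finset.sum_smul, Finset.sum_smul]
      simp only [smul_sub]
      rw [Finset.sum_sub_distrib, Finset.sum_sub_distrib]
      abel
    rw [key, hsum, zero_smul, add_zero]
    exact add_mem (sum_mem fun j _ => Submodule.smul_mem _ _ (hD j m0))
      (sum_mem fun m _ => Submodule.smul_mem _ _ (hB m))
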